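/- arXiv:1303.4777 — 3 statements merged into one kernel-verified Lean document; each statement's English description precedes it below -/
import Mathlib

section
/- Let r ≥ 0 and k ≥ 1, and let R = ℤ[ℤ^r × ℤ/kℤ] be the integral group algebra, with u ∈ R the canonical invertible element corresponding to the group element (0, 1̄). The minimal prime ideals of R are exactly the principal ideals (Φ_d(u)) generated by the d-th cyclotomic polynomial evaluated at u, for the positive divisors d of k; moreover, for distinct divisors d these ideals are pairwise distinct. -/
open Polynomial

namespace CycAux

variable {S₁ S₂ : Type*} [Semiring S₁] [Semiring S₂] {G : Type*} [AddMonoid G]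

/-- mapRange as a function into AddMonoidAlgebra -/
noncomputable def mr (f : S₁ →+* S₂) (x : AddMonoidAlgebra S₁ G) : AddMonoidAlgebra S₂ G :=
  AddMonoidAlgebra.ofCoeff (Finsupp.mapRange f f.map_zero x.coeff)

lemma mr_single (f : S₁ →+* S₂) (a : G) (b : S₁) :
    mr f (AddMonoidAlgebra.single a b) = AddMonoidAlgebra.single a (f b) :=
  congrArg AddMonoidAlgebra.ofCoeff Finsupp.mapRange_single

lemma mr_apply (f : S₁ →+* S₂) (x : AddMonoidAlgebra S₁ G) (g : G) :
    (mr f x).coeff g = f (x.coeff g) :=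
  Finsupp.mapRange_apply (hf := f.map_zero)

lemma mr_zero (f : S₁ →+* S₂) : mr f (0 : AddMonoidAlgebra S₁ G) = 0 :=
  congrArg AddMonoidAlgebra.ofCoeff Finsupp.mapRange_zero

lemma mr_add (f : S₁ →+* S₂) (x y : AddMonoidAlgebra S₁ G) :
    mr f (x + y) = mr f x + mr f y :=
  congrArg AddMonoidAlgebra.ofCoeff (Finsupp.mapRange_add f.map_add x.coeff y.coeff)

lemma mr_mul (f : S₁ →+* S₂) (x y : AddMonoidAlgebra S₁ G) :
    mr f (x * y) = mr f x * mr f y := by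
  induction x using AddMonoidAlgebra.induction_linear with
  | zero => rw [zero_mul, mr_zero, zero_mul]
  | add a b ha hb => rw [add_mul, mr_add, mr_add, ha, hb, add_mul]
  | single a b =>
      induction y using AddMonoidAlgebra.induction_linear with
      | zero => rw [mul_zero, mr_zero, mul_zero]
      | add c d hc hd => rw [mul_add, mr_add, mr_add, hc, hd, mul_add]
      | single c d =>
          rw [AddMonoidAlgebra.single_mul_single, mr_single, mr_single, mr_single, map_mul,
            AddMonoidAlgebra.single_mul_single]

lemma mr_one (f : S₁ →+* S₂) : mr f (1 : AddMonoidAlgebra S₁ G) = 1 := by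
  rw [AddMonoidAlgebra.one_def, AddMonoidAlgebra.one_def, mr_single, map_one]

/-- mapRange as a ring hom on AddMonoidAlgebra -/
noncomputable def mapRangeRingHom (G : Type*) [AddMonoid G] (f : S₁ →+* S₂) :
    AddMonoidAlgebra S₁ G →+* AddMonoidAlgebra S₂ G where
  toFun := mr f
  map_zero' := mr_zero f
  map_add' := mr_add f
  map_one' := mr_one f
  map_mul' := mr_mul f

lemma mapRangeRingHom_apply (f : S₁ →+* S₂) (x : AddMonoidAlgebra S₁ G) :
    mapRangeRingHom G f x = mr f x := rfl

set_option maxHeartbeats 1000000 in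
lemma ker_mapRangeRingHom_quotient {S : Type*} [CommRing S] {G : Type*} [AddCommMonoid G] (b : S) :
    RingHom.ker (mapRangeRingHom G (Ideal.Quotient.mk (Ideal.span {b})))
      = Ideal.span {(AddMonoidAlgebra.single (0 : G) b : AddMonoidAlgebra S G)} := by
  apply le_antisymm
  · intro x hx
    have hx0 : mr (Ideal.Quotient.mk (Ideal.span {b})) x = 0 := RingHom.mem_ker.mp hx
    have hdvd : ∀ g : G, b ∣ x.coeff g := by
      intro g
      have h1 : Ideal.Quotient.mk (Ideal.span {b}) (x.coeff g) = 0 := by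
        rw [← mr_apply (Ideal.Quotient.mk (Ideal.span {b})) x g, hx0]
        rfl
      rw [Ideal.Quotient.eq_zero_iff_mem, Ideal.mem_span_singleton] at h1
      exact h1
    choose c hc using hdvd
    have hx2 : x = (AddMonoidAlgebra.single (0 : G) b : AddMonoidAlgebra S G)
        * ∑ g ∈ x.coeff.support, (AddMonoidAlgebra.single g (c g) : AddMonoidAlgebra S G) := by
      rw [Finset.mul_sum]
      conv_lhs => rw [← AddMonoidAlgebra.sum_coeff_single x]
      rw [Finsupp.sum]
      refine Finset.sum_congr rfl fun g _ => ?_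
      rw [AddMonoidAlgebra.single_mul_single, zero_add, ← hc g]
    rw [hx2]
    exact Ideal.mul_mem_right _ _
      (Ideal.mem_span_singleton_self (AddMonoidAlgebra.single (0:G) b : AddMonoidAlgebra S G))
  · rw [Ideal.span_le, Set.singleton_subset_iff]
    show _ ∈ RingHom.ker _
    rw [RingHom.mem_ker, mapRangeRingHom_apply, mr_single,
      Ideal.Quotient.eq_zero_iff_mem.2 (Ideal.mem_span_singleton_self b)]
    exact AddMonoidAlgebra.single_eq_zero.2 rfl



section Prod
variable (M N : Type*) [AddCommMonoid M] [AddCommMonoid N]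

/-- The monoid hom underlying the currying map. -/
noncomputable def prodMu : Multiplicative (M × N) →*
    AddMonoidAlgebra (AddMonoidAlgebra ℤ N) M where
  toFun p := AddMonoidAlgebra.single (Multiplicative.toAdd p).1
    (AddMonoidAlgebra.single (Multiplicative.toAdd p).2 (1 : ℤ))
  map_one' := by
    rw [AddMonoidAlgebra.one_def, AddMonoidAlgebra.one_def]
    rfl
  map_mul' p q := by
    rw [AddMonoidAlgebra.single_mul_single, AddMonoidAlgebra.single_mul_single, one_mul]
    rfl

/-- The currying algebra hom on group algebras. -/
noncomputable def prodHom : AddMonoidAlgebra ℤ (M × N) →ₐ[ℤ]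
    AddMonoidAlgebra (AddMonoidAlgebra ℤ N) M :=
  AddMonoidAlgebra.lift ℤ _ (M × N) (prodMu M N)

lemma prodHom_single (m : M) (n : N) (c : ℤ) :
    prodHom M N (AddMonoidAlgebra.single (m, n) c)
      = AddMonoidAlgebra.single m (AddMonoidAlgebra.single n c) := by
  rw [prodHom, AddMonoidAlgebra.lift_single]
  show c • AddMonoidAlgebra.single m (AddMonoidAlgebra.single n (1:ℤ)) = _
  rw [AddMonoidAlgebra.smul_single, AddMonoidAlgebra.smul_single, smul_eq_mul, mul_one]

lemma prodHom_bijective : Function.Bijective (prodHom M N) := by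
  have : ⇑(prodHom M N) = ⇑(AddMonoidAlgebra.curryRingEquiv (R := ℤ) (M := M) (N := N)) := by
    funext x
    induction x using AddMonoidAlgebra.induction_linear with
    | zero => rw [map_zero, map_zero]
    | add a b ha hb => rw [map_add, map_add, ha, hb]
    | single a c =>
        obtain ⟨m, n⟩ := a
        rw [prodHom_single, AddMonoidAlgebra.curryRingEquiv_single]
  rw [this]
  exact AddMonoidAlgebra.curryRingEquiv.bijective

end Prod


variable (k : ℕ)

/-- the canonical generator of ℤ[ℤ/k] -/
noncomputable def vv : AddMonoidAlgebra ℤ (ZMod k) :=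
  AddMonoidAlgebra.single (1 : ZMod k) (1 : ℤ)

lemma psi_monomial (n : ℕ) (c : ℤ) :
    aeval (vv k) (monomial n c) = AddMonoidAlgebra.single ((n : ZMod k)) c := by
  rw [aeval_monomial]
  have h1 : (vv k) ^ n = AddMonoidAlgebra.single ((n : ZMod k)) (1 : ℤ) := by
    rw [vv, AddMonoidAlgebra.single_pow, one_pow, nsmul_eq_mul, mul_one]
  have h2 : algebraMap ℤ (AddMonoidAlgebra ℤ (ZMod k)) c
      = AddMonoidAlgebra.single (0 : ZMod k) c := by
    rw [Algebra.algebraMap_eq_smul_one, AddMonoidAlgebra.one_def, AddMonoidAlgebra.smul_single,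
      smul_eq_mul, mul_one]
  rw [h1, h2, AddMonoidAlgebra.single_mul_single, zero_add, mul_one]

lemma psi_X_pow (n : ℕ) :
    aeval (vv k) ((X : ℤ[X]) ^ n) = AddMonoidAlgebra.single ((n : ZMod k)) (1 : ℤ) := by
  rw [X_pow_eq_monomial, psi_monomial]

lemma psi_surjective (hk : k ≠ 0) :
    Function.Surjective (aeval (vv k) : ℤ[X] →ₐ[ℤ] AddMonoidAlgebra ℤ (ZMod k)) := by
  haveI : NeZero k := ⟨hk⟩
  intro b
  induction b using AddMonoidAlgebra.induction_linear with
  | zero => exact ⟨0, map_zero _⟩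
  | add f g hf hg =>
      obtain ⟨p, hp⟩ := hf; obtain ⟨q, hq⟩ := hg
      exact ⟨p + q, by rw [map_add, hp, hq]⟩
  | single n c =>
      refine ⟨monomial n.val c, ?_⟩
      rw [psi_monomial]
      congr 1
      exact ZMod.natCast_rightInverse n

lemma psi_X_pow_sub_one (hk : 0 < k) :
    aeval (vv k) ((X : ℤ[X]) ^ k - 1) = 0 := by
  rw [map_sub, map_one, psi_X_pow, ZMod.natCast_self, ← AddMonoidAlgebra.one_def, sub_self]

lemma psi_ker (hk : 0 < k) :
    RingHom.ker (aeval (vv k) : ℤ[X] →ₐ[ℤ] AddMonoidAlgebra ℤ (ZMod k))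
      = Ideal.span {(X : ℤ[X]) ^ k - 1} := by
  apply le_antisymm
  · intro p hp
    have hp0 : aeval (vv k) p = 0 := RingHom.mem_ker.mp hp
    have hC : ((X : ℤ[X]) ^ k - 1) = X ^ k - C 1 := by rw [map_one]
    have hmono : ((X : ℤ[X]) ^ k - 1).Monic := by
      rw [hC]; exact monic_X_pow_sub_C 1 hk.ne'
    have hone : ((X : ℤ[X]) ^ k - 1) ≠ 1 := by
      intro h
      have := congrArg natDegree h
      rw [hC, natDegree_X_pow_sub_C, natDegree_one] at this
      omega
    rw [Ideal.mem_span_singleton, ← modByMonic_eq_zero_iff_dvd hmono]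
    set q := p %ₘ ((X : ℤ[X]) ^ k - 1) with hq
    have hdeg : q.natDegree < k := by
      have := natDegree_modByMonic_lt p hmono hone
      rwa [hC, natDegree_X_pow_sub_C] at this
    have hqeval : aeval (vv k) q = 0 := by
      have hdivmod := modByMonic_add_div p ((X : ℤ[X]) ^ k - 1)
      have : aeval (vv k) (p %ₘ ((X:ℤ[X])^k - 1) + ((X:ℤ[X])^k - 1) * (p /ₘ ((X:ℤ[X])^k - 1)))
          = aeval (vv k) p := by rw [hdivmod]
      rw [map_add, map_mul, psi_X_pow_sub_one k hk, zero_mul, add_zero, hp0] at this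
      exact this
    have hcoeff : ∀ i < k, q.coeff i = 0 := by
      intro i0 hi0
      have hsum : q = ∑ i ∈ Finset.range k, monomial i (q.coeff i) := as_sum_range' q k hdeg
      have heval : (0 : AddMonoidAlgebra ℤ (ZMod k))
          = ∑ i ∈ Finset.range k, AddMonoidAlgebra.single ((i : ZMod k)) (q.coeff i) := by
        rw [← hqeval]
        conv_lhs => rw [hsum]
        rw [map_sum]
        exact Finset.sum_congr rfl fun i _ => psi_monomial k i (q.coeff i)
      have happ := congrArg (fun z : AddMonoidAlgebra ℤ (ZMod k) => z.coeff ((i0 : ZMod k))) heval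
      simp only [AddMonoidAlgebra.coeff_zero, Finsupp.coe_zero, Pi.zero_apply] at happ
      rw [AddMonoidAlgebra.coeff_sum, Finsupp.finset_sum_apply] at happ
      classical
      have hval : ∀ i ∈ Finset.range k, i ≠ i0 →
          (AddMonoidAlgebra.single ((i : ZMod k)) (q.coeff i) : AddMonoidAlgebra ℤ (ZMod k)).coeff
            ((i0 : ZMod k)) = 0 := by
        intro i hi hne
        rw [AddMonoidAlgebra.coeff_single, Finsupp.single_apply, if_neg]
        intro hcast
        apply hne
        have h1 := ZMod.val_cast_of_lt (n := k) (Finset.mem_range.mp hi)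
        have h2 := ZMod.val_cast_of_lt (n := k) hi0
        rw [← h1, ← h2, hcast]
      rw [Finset.sum_eq_single_of_mem i0 (Finset.mem_range.mpr hi0) hval,
        AddMonoidAlgebra.coeff_single, Finsupp.single_apply, if_pos rfl] at happ
      exact happ.symm
    ext n
    rcases lt_or_ge n k with h | h
    · rw [hcoeff n h, coeff_zero]
    · rw [coeff_eq_zero_of_natDegree_lt (lt_of_lt_of_le hdeg h), coeff_zero]
  · rw [Ideal.span_le, Set.singleton_subset_iff]
    exact RingHom.mem_ker.mpr (psi_X_pow_sub_one k hk)

variable (k : ℕ)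


lemma cyclotomic_dvd_X_pow_sub_one' {d : ℕ} (hk : 0 < k) (hd : d ∣ k) :
    cyclotomic d ℤ ∣ (X : ℤ[X]) ^ k - 1 := by
  rw [← prod_cyclotomic_eq_X_pow_sub_one hk ℤ]
  exact Finset.dvd_prod_of_mem _ (Nat.mem_divisors.mpr ⟨hd, hk.ne'⟩)

lemma mem_span_iff_dvd {d : ℕ} (hk : 0 < k) (hd : d ∣ k) (p : ℤ[X]) :
    aeval (vv k) p ∈ Ideal.span {aeval (vv k) (cyclotomic d ℤ)} ↔ cyclotomic d ℤ ∣ p := by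
  have hmap : Ideal.span {aeval (vv k) (cyclotomic d ℤ)}
      = Ideal.map (aeval (vv k) : ℤ[X] →ₐ[ℤ] AddMonoidAlgebra ℤ (ZMod k))
          (Ideal.span {cyclotomic d ℤ}) := by
    rw [Ideal.map_span, Set.image_singleton]
  have hker_le : RingHom.ker (aeval (vv k) : ℤ[X] →ₐ[ℤ] AddMonoidAlgebra ℤ (ZMod k))
      ≤ Ideal.span {cyclotomic d ℤ} := by
    rw [psi_ker k hk, Ideal.span_le, Set.singleton_subset_iff]
    exact Ideal.mem_span_singleton.mpr (cyclotomic_dvd_X_pow_sub_one' k hk hd)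
  constructor
  · intro h
    rw [hmap] at h
    obtain ⟨x, hx, hfx⟩ := (Ideal.mem_map_iff_of_surjective _ (psi_surjective k hk.ne')).1 h
    have hsub : p - x ∈ RingHom.ker (aeval (vv k) : ℤ[X] →ₐ[ℤ] AddMonoidAlgebra ℤ (ZMod k)) := by
      rw [RingHom.mem_ker, map_sub, hfx, sub_self]
    have : p ∈ Ideal.span {cyclotomic d ℤ} := by
      have := Ideal.add_mem _ hx (hker_le hsub)
      rwa [add_sub_cancel] at this
    exact Ideal.mem_span_singleton.mp this
  · intro h
    rw [hmap]
    exact Ideal.mem_map_of_mem _ (Ideal.mem_span_singleton.mpr h)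

lemma quot_isDomain {d : ℕ} (hk : 0 < k) (hd : d ∣ k) (hd0 : 0 < d) :
    IsDomain (AddMonoidAlgebra ℤ (ZMod k) ⧸
      Ideal.span {aeval (vv k) (cyclotomic d ℤ)}) := by
  set J := Ideal.span {aeval (vv k) (cyclotomic d ℤ)} with hJ
  let φ : ℤ[X] →+* (AddMonoidAlgebra ℤ (ZMod k) ⧸ J) :=
    (Ideal.Quotient.mk J).comp (aeval (vv k) : ℤ[X] →ₐ[ℤ] AddMonoidAlgebra ℤ (ZMod k)).toRingHom
  have hsurj : Function.Surjective φ :=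
    (Ideal.Quotient.mk_surjective).comp (psi_surjective k hk.ne')
  have hker : RingHom.ker φ = Ideal.span {cyclotomic d ℤ} := by
    ext q
    rw [RingHom.mem_ker]
    show Ideal.Quotient.mk J (aeval (vv k) q) = 0 ↔ _
    rw [Ideal.Quotient.eq_zero_iff_mem, hJ, mem_span_iff_dvd k hk hd,
      Ideal.mem_span_singleton]
  haveI hprime : (Ideal.span {cyclotomic d ℤ}).IsPrime :=
    (Ideal.span_singleton_prime (cyclotomic_ne_zero d ℤ)).2
      ((UniqueFactorizationMonoid.irreducible_iff_prime).1 (cyclotomic.irreducible hd0))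
  have e : (ℤ[X] ⧸ Ideal.span {cyclotomic d ℤ}) ≃+* (AddMonoidAlgebra ℤ (ZMod k) ⧸ J) := by
    rw [← hker]
    exact RingHom.quotientKerEquivOfSurjective hsurj
  exact MulEquiv.isDomain _ e.symm.toMulEquiv


end CycAux

open CycAux

set_option synthInstance.maxHeartbeats 1000000
set_option maxHeartbeats 1000000

/-- Let `R = ℤ[ℤ^r × ℤ/kℤ]` be the integral group algebra, with `u ∈ R` the
canonical invertible element corresponding to the group element `(0, 1̄)`.
The minimal prime ideals of `R` are exactly the principal ideals `(Φ_d(u))`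
generated by the `d`-th cyclotomic polynomial evaluated at `u`, for the
positive divisors `d` of `k`; moreover these ideals are pairwise distinct. -/
theorem minimalPrimes_groupAlgebra_eq_span_cyclotomic
    (r k : ℕ) (hk : 1 ≤ k) :
    let R := AddMonoidAlgebra ℤ ((Fin r →₀ ℤ) × ZMod k)
    let u : R := AddMonoidAlgebra.single ((0 : Fin r →₀ ℤ), (1 : ZMod k)) (1 : ℤ)
    minimalPrimes R =
      {I : Ideal R | ∃ d ∈ k.divisors,
        I = Ideal.span {Polynomial.aeval u (Polynomial.cyclotomic d ℤ)}} ∧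
    ∀ d ∈ k.divisors, ∀ e ∈ k.divisors, d ≠ e →
      (Ideal.span {Polynomial.aeval u (Polynomial.cyclotomic d ℤ)} : Ideal R) ≠
        Ideal.span {Polynomial.aeval u (Polynomial.cyclotomic e ℤ)} := by
  intro R u
  classical
  have hk0 : 0 < k := hk
  -- the per-divisor key facts
  have key : ∀ d ∈ k.divisors,
      (Ideal.span {Polynomial.aeval u (Polynomial.cyclotomic d ℤ)} : Ideal R).IsPrime ∧
      (∀ e : ℕ, Polynomial.aeval u (Polynomial.cyclotomic e ℤ) ∈
          (Ideal.span {Polynomial.aeval u (Polynomial.cyclotomic d ℤ)} : Ideal R) ↔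
          Polynomial.cyclotomic d ℤ ∣ Polynomial.cyclotomic e ℤ) := by
    intro d hd
    have hdk : d ∣ k := (Nat.mem_divisors.mp hd).1
    have hd0 : 0 < d := Nat.pos_of_mem_divisors hd
    set Jd : Ideal (AddMonoidAlgebra ℤ (ZMod k)) :=
      Ideal.span {aeval (vv k) (cyclotomic d ℤ)} with hJd
    haveI hdom : IsDomain (AddMonoidAlgebra ℤ (ZMod k) ⧸ Jd) := quot_isDomain k hk0 hdk hd0
    haveI : IsDomain (AddMonoidAlgebra (AddMonoidAlgebra ℤ (ZMod k) ⧸ Jd) (Fin r →₀ ℤ)) :=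
      NoZeroDivisors.to_isDomain _
    have hFbij := prodHom_bijective (Fin r →₀ ℤ) (ZMod k)
    set F := prodHom (Fin r →₀ ℤ) (ZMod k) with hFdef
    set χ : R →+* AddMonoidAlgebra (AddMonoidAlgebra ℤ (ZMod k) ⧸ Jd) (Fin r →₀ ℤ) :=
      (mapRangeRingHom _ (Ideal.Quotient.mk Jd)).comp F.toRingHom with hχ
    have hFu : ∀ p : ℤ[X], F (aeval u p)
        = AddMonoidAlgebra.single (0 : Fin r →₀ ℤ) (aeval (vv k) p) := by
      intro p
      have h1 : F u = AddMonoidAlgebra.single (0 : Fin r →₀ ℤ) (vv k) :=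
        prodHom_single _ _ 0 1 1
      have h2 := aeval_algHom_apply
        (AddMonoidAlgebra.singleZeroAlgHom (R := ℤ) (A := AddMonoidAlgebra ℤ (ZMod k))
          (M := Fin r →₀ ℤ)) (vv k) p
      have h3 := aeval_algHom_apply F u p
      rw [h1] at h3
      exact h3.symm.trans h2
    have hχker : RingHom.ker χ = Ideal.span {Polynomial.aeval u (Polynomial.cyclotomic d ℤ)} := by
      have h2 : RingHom.ker χ = (Ideal.span {AddMonoidAlgebra.single (0 : Fin r →₀ ℤ)
          (aeval (vv k) (cyclotomic d ℤ))}).comap F.toRingHom := by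
        rw [hχ, ← RingHom.comap_ker, ker_mapRangeRingHom_quotient]
      have h3 : Ideal.map F.toRingHom
          (Ideal.span {Polynomial.aeval u (Polynomial.cyclotomic d ℤ)} : Ideal R)
          = Ideal.span {AddMonoidAlgebra.single (0 : Fin r →₀ ℤ)
              (aeval (vv k) (cyclotomic d ℤ))} := by
        rw [Ideal.map_span, Set.image_singleton]
        congr 1
        exact congrArg _ (hFu (cyclotomic d ℤ))
      rw [h2, ← h3, Ideal.comap_map_of_surjective F.toRingHom hFbij.2,
        ← RingHom.ker_eq_comap_bot, (RingHom.injective_iff_ker_eq_bot F.toRingHom).mp hFbij.1, sup_bot_eq]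
    constructor
    · rw [← hχker]; exact RingHom.ker_isPrime χ
    · intro e
      rw [← hχker, RingHom.mem_ker]
      have hval : χ (aeval u (cyclotomic e ℤ)) = AddMonoidAlgebra.single (0 : Fin r →₀ ℤ)
          (Ideal.Quotient.mk Jd (aeval (vv k) (cyclotomic e ℤ))) := by
        show mapRangeRingHom _ (Ideal.Quotient.mk Jd) (F (aeval u (cyclotomic e ℤ))) = _
        rw [hFu, mapRangeRingHom_apply, mr_single]
      rw [hval, AddMonoidAlgebra.single_eq_zero, Ideal.Quotient.eq_zero_iff_mem, hJd,
        mem_span_iff_dvd k hk0 hdk]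
  -- product of cyclotomics is zero
  have hProd : (∏ d ∈ k.divisors, Polynomial.aeval u (Polynomial.cyclotomic d ℤ)) = (0 : R) := by
    have h1 : (∏ d ∈ k.divisors, Polynomial.aeval u (Polynomial.cyclotomic d ℤ))
        = aeval u ((X : ℤ[X]) ^ k - 1) := by
      rw [← prod_cyclotomic_eq_X_pow_sub_one hk0 ℤ, map_prod]
    have hu : u ^ k = (1 : R) := by
      have hu0 : u = AddMonoidAlgebra.single ((0 : Fin r →₀ ℤ), (1 : ZMod k)) (1 : ℤ) := rfl
      have hsm : k • ((0 : Fin r →₀ ℤ), (1 : ZMod k))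
          = ((0 : Fin r →₀ ℤ) , (0 : ZMod k)) := by
        rw [Prod.smul_mk, smul_zero, nsmul_eq_mul, mul_one, ZMod.natCast_self]
      rw [hu0, AddMonoidAlgebra.single_pow, one_pow, hsm, Prod.mk_zero_zero,
        ← AddMonoidAlgebra.one_def]
    rw [h1, map_sub, map_one, map_pow, aeval_X, hu, sub_self]
  -- every prime contains one of the spans
  have hle : ∀ Q : Ideal R, Q.IsPrime →
      ∃ d ∈ k.divisors, (Ideal.span {Polynomial.aeval u (Polynomial.cyclotomic d ℤ)} : Ideal R) ≤ Q := by
    intro Q hQp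
    haveI := hQp
    have h0 : (∏ d ∈ k.divisors, Polynomial.aeval u (Polynomial.cyclotomic d ℤ)) ∈ Q := by
      rw [hProd]; exact Q.zero_mem
    obtain ⟨d, hd, hmem⟩ := Ideal.IsPrime.prod_mem_iff.1 h0
    exact ⟨d, hd, (Ideal.span_singleton_le_iff_mem _).2 hmem⟩
  -- divisibility between cyclotomics forces equality of indices
  have hdeq : ∀ d ∈ k.divisors, ∀ e ∈ k.divisors,
      Polynomial.cyclotomic d ℤ ∣ Polynomial.cyclotomic e ℤ → d = e := by
    intro d hd e he hdvd
    exact cyclotomic_injective (R := ℤ)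
      (eq_of_monic_of_associated (cyclotomic.monic d ℤ) (cyclotomic.monic e ℤ)
        ((cyclotomic.irreducible (Nat.pos_of_mem_divisors hd)).associated_of_dvd
          (cyclotomic.irreducible (Nat.pos_of_mem_divisors he)) hdvd))
  have hne : ∀ d ∈ k.divisors, ∀ e ∈ k.divisors, d ≠ e →
      (Ideal.span {Polynomial.aeval u (Polynomial.cyclotomic d ℤ)} : Ideal R) ≠
        Ideal.span {Polynomial.aeval u (Polynomial.cyclotomic e ℤ)} := by
    intro d hd e he hde heq
    have h1 : Polynomial.aeval u (Polynomial.cyclotomic e ℤ) ∈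
        (Ideal.span {Polynomial.aeval u (Polynomial.cyclotomic e ℤ)} : Ideal R) :=
      Ideal.mem_span_singleton_self _
    rw [← heq] at h1
    exact hde (hdeq d hd e he ((key d hd).2 e |>.1 h1))
  refine ⟨?_, hne⟩
  rw [minimalPrimes_eq_minimals]
  ext I
  simp only [Set.mem_setOf_eq]
  constructor
  · rintro ⟨hIp, hImin⟩
    obtain ⟨d, hd, hdle⟩ := hle I hIp
    exact ⟨d, hd, le_antisymm (hImin (key d hd).1 hdle) hdle⟩
  · rintro ⟨d, hd, rfl⟩
    refine ⟨(key d hd).1, ?_⟩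
    intro Q hQp hQle
    obtain ⟨e, he, hele⟩ := hle Q hQp
    have hed : e = d := by
      have h1 : Polynomial.aeval u (Polynomial.cyclotomic e ℤ) ∈
          (Ideal.span {Polynomial.aeval u (Polynomial.cyclotomic d ℤ)} : Ideal R) :=
        hQle (hele (Ideal.mem_span_singleton_self _))
      exact (hdeq d hd e he ((key d hd).2 e |>.1 h1)).symm
    exact hed ▸ hele
end

section
/- Let r ≥ 0 and k ≥ 1, let R = ℤ[ℤ^r × ℤ/kℤ] be the integral group algebra, u ∈ R the canonical invertible element corresponding to the group element (0, 1̄), and p = (Φ_k(u)) the minimal prime ideal generated by the k-th cyclotomic polynomial evaluated at u. Then the localization R_p of R at the prime ideal p is a field, isomorphic to the field ℚ(ζ_k)(x₁, …, x_r) of rational functions in r variables over the k-th cyclotomic field, i.e. to the fraction field of the polynomial ring in r variables over ℚ(ζ_k). -/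
set_option linter.unusedSectionVars false
set_option maxHeartbeats 1000000
set_option synthInstance.maxHeartbeats 1000000

open Polynomial AddMonoidAlgebra

namespace CLA

variable (r k : ℕ) (hk : 0 < k) [NeZero k]

abbrev Kf := CyclotomicField ((⟨k, hk⟩ : ℕ+) : ℕ) ℚ

lemma kNZ : NeZero ((((⟨k, hk⟩ : ℕ+) : ℕ)) : ℚ) := ⟨by exact_mod_cast hk.ne'⟩

lemma kNZn : NeZero ((⟨k, hk⟩ : ℕ+) : ℕ) := ⟨hk.ne'⟩

lemma kCyc : IsCyclotomicExtension {((⟨k, hk⟩ : ℕ+) : ℕ)} ℚ (Kf k hk) := by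
  haveI := kNZ k hk
  exact CyclotomicField.isCyclotomicExtension _ _
abbrev Pf := MvPolynomial (Fin r) (Kf k hk)
abbrev Ff := FractionRing (Pf r k hk)

noncomputable def zet : Kf k hk := by
  haveI := kNZn k hk; haveI := kCyc k hk
  exact IsCyclotomicExtension.zeta ((⟨k, hk⟩ : ℕ+) : ℕ) ℚ _
lemma hzet : IsPrimitiveRoot (zet k hk) k := by
  haveI := kNZn k hk; haveI := kCyc k hk
  exact IsCyclotomicExtension.zeta_spec ((⟨k, hk⟩ : ℕ+) : ℕ) ℚ _

noncomputable def cmap : Kf k hk →+* Ff r k hk :=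
  (algebraMap (Pf r k hk) (Ff r k hk)).comp (MvPolynomial.C)

lemma cmap_inj : Function.Injective (cmap r k hk) := (cmap r k hk).injective

noncomputable def zF : Ff r k hk := cmap r k hk (zet k hk)

lemma hzF : IsPrimitiveRoot (zF r k hk) k :=
  (hzet k hk).map_of_injective (cmap_inj r k hk)

lemma zF_ne : zF r k hk ≠ 0 := (hzF r k hk).ne_zero hk.ne'

noncomputable def zU : (Ff r k hk)ˣ := Units.mk0 _ (zF_ne r k hk)

lemma algMap_inj : Function.Injective (algebraMap (Pf r k hk) (Ff r k hk)) :=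
  IsFractionRing.injective _ _

noncomputable def XU (i : Fin r) : (Ff r k hk)ˣ :=
  Units.mk0 (algebraMap (Pf r k hk) (Ff r k hk) (MvPolynomial.X i))
    (fun h => MvPolynomial.X_ne_zero i (algMap_inj r k hk (by rw [h, map_zero])))

noncomputable def eAdd : (Fin r →₀ ℤ) →+ Additive (Ff r k hk)ˣ where
  toFun n := Additive.ofMul (∏ i, XU r k hk i ^ (n i))
  map_zero' := by simp
  map_add' x y := by
    simp only [Finsupp.add_apply, zpow_add, Finset.prod_mul_distrib]
    rfl

lemma zU_pow_k : zU r k hk ^ k = 1 := by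
  rw [← Units.val_eq_one]
  push_cast
  show (zF r k hk) ^ k = 1
  rw [zF, ← map_pow, (hzet k hk).pow_eq_one, map_one]

noncomputable def torAdd : ZMod k →+ Additive (Ff r k hk)ˣ :=
  ZMod.lift k ⟨zmultiplesHom _ (Additive.ofMul (zU r k hk)), by
    show ((k : ℤ) • Additive.ofMul (zU r k hk)) = 0
    rw [← ofMul_zpow, zpow_natCast, zU_pow_k]
    rfl⟩

lemma torAdd_apply (j : ZMod k) :
    torAdd r k hk j = Additive.ofMul (zU r k hk ^ (j.val)) := by
  have h : j = ((j.val : ℤ) : ZMod k) := by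
    push_cast
    rw [ZMod.natCast_val, ZMod.cast_id]
  conv_lhs => rw [h]
  rw [torAdd, ZMod.lift_coe]
  show (((j.val : ℤ)) • Additive.ofMul (zU r k hk)) = _
  rw [natCast_zsmul, ← ofMul_pow]

noncomputable def chi : ((Fin r →₀ ℤ) × ZMod k) →+ Additive (Ff r k hk)ˣ :=
  (eAdd r k hk).comp (AddMonoidHom.fst _ _) + (torAdd r k hk).comp (AddMonoidHom.snd _ _)

lemma chi_apply (n : Fin r →₀ ℤ) (j : ZMod k) :
    Additive.toMul (chi r k hk (n, j))
      = (∏ i, XU r k hk i ^ (n i)) * zU r k hk ^ (j.val) := by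
  rw [chi]
  simp only [AddMonoidHom.add_apply, AddMonoidHom.comp_apply, torAdd_apply, toMul_add]
  rfl

noncomputable def phi : AddMonoidAlgebra ℤ ((Fin r →₀ ℤ) × ZMod k) →ₐ[ℤ] Ff r k hk :=
  AddMonoidAlgebra.lift ℤ _ _ ((Units.coeHom _).comp (AddMonoidHom.toMultiplicativeLeft (chi r k hk)))

lemma phi_single (n : Fin r →₀ ℤ) (j : ZMod k) (c : ℤ) :
    phi r k hk (AddMonoidAlgebra.single (n, j) c)
      = (c : Ff r k hk) * (((∏ i, XU r k hk i ^ (n i)) * zU r k hk ^ (j.val) : (Ff r k hk)ˣ) : Ff r k hk) := by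
  rw [phi, AddMonoidAlgebra.lift_single]
  have : ((Units.coeHom (Ff r k hk)).comp (AddMonoidHom.toMultiplicativeLeft (chi r k hk)))
      (Multiplicative.ofAdd (n, j))
      = ((Additive.toMul (chi r k hk (n, j)) : (Ff r k hk)ˣ) : Ff r k hk) := rfl
  rw [this, chi_apply, Algebra.smul_def]
  rw [eq_intCast]


noncomputable def toN (ℓ : Fin r →₀ ℤ) : Fin r →₀ ℕ := ℓ.mapRange Int.toNat Int.toNat_zero

lemma eAdd_monom (ℓ : Fin r →₀ ℤ) (h : ∀ i, 0 ≤ ℓ i) :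
    ((Additive.toMul (eAdd r k hk ℓ) : (Ff r k hk)ˣ) : Ff r k hk)
      = algebraMap (Pf r k hk) (Ff r k hk) (MvPolynomial.monomial (toN r ℓ) 1) := by
  have hL : ((Additive.toMul (eAdd r k hk ℓ) : (Ff r k hk)ˣ) : Ff r k hk)
      = ∏ i, (algebraMap (Pf r k hk) (Ff r k hk) (MvPolynomial.X i)) ^ (ℓ i) := by
    show (Units.coeHom (Ff r k hk)) (∏ i, XU r k hk i ^ (ℓ i)) = _
    rw [map_prod]
    exact Finset.prod_congr rfl fun i _ => by rw [map_zpow]; rfl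
  rw [hL, MvPolynomial.monomial_eq, MvPolynomial.C_1, one_mul,
    Finsupp.prod_fintype _ _ (fun i => pow_zero _), map_prod]
  refine Finset.prod_congr rfl fun i _ => ?_
  rw [map_pow, toN, Finsupp.mapRange_apply, ← zpow_natCast, Int.toNat_of_nonneg (h i)]

lemma indep (s : Finset (Fin r →₀ ℤ)) (c : (Fin r →₀ ℤ) → Kf k hk)
    (hsum : ∑ n ∈ s, cmap r k hk (c n)
        * ((Additive.toMul (eAdd r k hk n) : (Ff r k hk)ˣ) : Ff r k hk) = 0) :
    ∀ n ∈ s, c n = 0 := by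
  classical
  set M : Fin r →₀ ℤ := ∑ n ∈ s, n.mapRange (fun t => max 0 (-t)) (by simp) with hM
  have hMapp : ∀ i, M i = ∑ n' ∈ s, max 0 (-(n' i)) := by
    intro i
    rw [hM, Finsupp.finset_sum_apply]
    exact Finset.sum_congr rfl fun n' _ => by rw [Finsupp.mapRange_apply]
  have hMn : ∀ n ∈ s, ∀ i, 0 ≤ (n + M) i := by
    intro n hn i
    have h1 : max 0 (-(n i)) ≤ ∑ n' ∈ s, max 0 (-(n' i)) :=
      Finset.single_le_sum (f := fun n' => (0:ℤ) ⊔ -(n' i)) (fun n' _ => le_max_left _ _) hn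
    have h2 : -(n i) ≤ max 0 (-(n i)) := le_max_right _ _
    have := hMapp i
    rw [Finsupp.add_apply]
    omega
  -- multiply by the monomial for M
  have h2 : ∑ n ∈ s, cmap r k hk (c n)
      * ((Additive.toMul (eAdd r k hk (n + M)) : (Ff r k hk)ˣ) : Ff r k hk) = 0 := by
    have := congrArg (· * ((Additive.toMul (eAdd r k hk M) : (Ff r k hk)ˣ) : Ff r k hk)) hsum
    simp only [Finset.sum_mul, zero_mul] at this
    rw [← this]
    refine Finset.sum_congr rfl fun n _ => ?_
    rw [map_add, toMul_add, mul_assoc]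
    norm_cast
  have h3 : ∑ n ∈ s, (MvPolynomial.monomial (toN r (n + M)) (c n) : Pf r k hk) = 0 := by
    apply algMap_inj r k hk
    rw [map_sum, map_zero]
    rw [← h2]
    refine Finset.sum_congr rfl fun n hn => ?_
    rw [eAdd_monom r k hk _ (hMn n hn), cmap, RingHom.comp_apply, ← map_mul,
      MvPolynomial.C_mul_monomial, mul_one]
  intro n₀ hn₀
  have h4 := congrArg (MvPolynomial.coeff (toN r (n₀ + M))) h3
  rw [MvPolynomial.coeff_sum, MvPolynomial.coeff_zero] at h4
  have hinj : ∀ n ∈ s, toN r (n + M) = toN r (n₀ + M) → n = n₀ := by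
    intro n hn he
    ext i
    have e1 := congrArg (fun f => (f i : ℕ)) he
    simp only [toN, Finsupp.mapRange_apply] at e1
    have := hMn n hn i
    have := hMn n₀ hn₀ i
    have e2 : (n + M) i = (n₀ + M) i := by omega
    simpa [Finsupp.add_apply] using e2
  rw [Finset.sum_eq_single_of_mem n₀ hn₀ (fun b hb hne =>
    by rw [MvPolynomial.coeff_monomial, if_neg (fun h => hne (hinj b hb h))])] at h4
  rwa [MvPolynomial.coeff_monomial, if_pos rfl] at h4

noncomputable def uu : AddMonoidAlgebra ℤ ((Fin r →₀ ℤ) × ZMod k) :=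
  AddMonoidAlgebra.single ((0 : Fin r →₀ ℤ), (1 : ZMod k)) (1 : ℤ)

lemma zF_pow_k : zF r k hk ^ k = 1 := by
  rw [zF, ← map_pow, (hzet k hk).pow_eq_one, map_one]

lemma phi_u : phi r k hk (uu r k) = zF r k hk := by
  rw [uu, phi_single]
  simp only [Finsupp.coe_zero, Pi.zero_apply, zpow_zero, Finset.prod_const_one, one_mul,
    Int.cast_one]
  show ((zU r k hk ^ ((1 : ZMod k).val) : (Ff r k hk)ˣ) : Ff r k hk) = zF r k hk
  rw [Units.val_pow_eq_pow_val]
  show zF r k hk ^ ((1 : ZMod k).val) = zF r k hk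
  rw [ZMod.val_one_eq_one_mod, ← pow_eq_pow_mod 1 (zF_pow_k r k hk), pow_one]

lemma phi_cyc : phi r k hk (Polynomial.aeval (uu r k) (Polynomial.cyclotomic k ℤ)) = 0 := by
  rw [← Polynomial.aeval_algHom_apply, phi_u, Polynomial.aeval_def,
    Polynomial.eval₂_eq_eval_map, Polynomial.map_cyclotomic]
  exact (hzF r k hk).isRoot_cyclotomic hk

noncomputable def gp : ℤ[X] := (Polynomial.cyclotomic.dvd_X_pow_sub_one k ℤ).choose

lemma gp_spec : (X : ℤ[X]) ^ k - 1 = Polynomial.cyclotomic k ℤ * gp k :=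
  (Polynomial.cyclotomic.dvd_X_pow_sub_one k ℤ).choose_spec

lemma uu_pow_k : uu r k ^ k = 1 := by
  rw [uu, AddMonoidAlgebra.single_pow, one_pow]
  have : k • ((0 : Fin r →₀ ℤ), (1 : ZMod k)) = ((0 : Fin r →₀ ℤ), (0 : ZMod k)) := by
    rw [Prod.smul_mk, smul_zero]
    congr 1
    rw [nsmul_eq_mul, mul_one, ZMod.natCast_self]
  rw [this]
  rfl

lemma cyc_mul_gp : (Polynomial.aeval (uu r k) (Polynomial.cyclotomic k ℤ))
    * (Polynomial.aeval (uu r k) (gp k)) = 0 := by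
  rw [← map_mul, ← gp_spec, map_sub, map_pow, Polynomial.aeval_X, map_one, uu_pow_k, sub_self]

lemma charZeroK : CharZero (Kf k hk) :=
  charZero_of_injective_algebraMap (algebraMap ℚ (Kf k hk)).injective

lemma charZeroF : CharZero (Ff r k hk) := by
  haveI := charZeroK k hk
  exact charZero_of_injective_algebraMap (algMap_inj r k hk)

lemma phi_gp_ne : phi r k hk (Polynomial.aeval (uu r k) (gp k)) ≠ 0 := by
  haveI := charZeroF r k hk
  rw [← Polynomial.aeval_algHom_apply, phi_u, Polynomial.aeval_def,
    Polynomial.eval₂_eq_eval_map]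
  intro h0
  set F := Ff r k hk
  set gF : F[X] := (gp k).map (algebraMap ℤ F) with hgF
  have hfac : (X : F[X]) ^ k - 1 = Polynomial.cyclotomic k F * gF := by
    have := congrArg (Polynomial.map (algebraMap ℤ F)) (gp_spec k)
    simpa only [Polynomial.map_sub, Polynomial.map_pow, Polynomial.map_X, Polynomial.map_one,
      Polynomial.map_mul, Polynomial.map_cyclotomic] using this
  have hder := congrArg (fun p => Polynomial.eval (zF r k hk) (Polynomial.derivative p)) hfac
  simp only [Polynomial.derivative_sub, Polynomial.derivative_one, Polynomial.derivative_X_pow,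
    Polynomial.derivative_mul, Polynomial.eval_sub, Polynomial.eval_mul, Polynomial.eval_add,
    Polynomial.eval_pow, Polynomial.eval_C, Polynomial.eval_X, Polynomial.eval_zero,
    sub_zero] at hder
  rw [show Polynomial.eval (zF r k hk) (Polynomial.cyclotomic k F) = 0 from
    (hzF r k hk).isRoot_cyclotomic hk, h0, mul_zero, zero_add, zero_mul] at hder
  have hkF : ((k : F)) ≠ 0 := Nat.cast_ne_zero.2 hk.ne'
  exact (mul_ne_zero hkF (pow_ne_zero _ (zF_ne r k hk))) hder

lemma expand_sum (a : AddMonoidAlgebra ℤ ((Fin r →₀ ℤ) × ZMod k)) :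
    a = ∑ n ∈ a.coeff.support.image Prod.fst, ∑ j : ZMod k,
      AddMonoidAlgebra.single (n, j) (a.coeff (n, j)) := by
  classical
  have hsub : a.coeff.support ⊆ (a.coeff.support.image Prod.fst) ×ˢ (Finset.univ : Finset (ZMod k)) := by
    intro g hg
    rw [Finset.mem_product]
    exact ⟨Finset.mem_image_of_mem _ hg, Finset.mem_univ _⟩
  calc a = ∑ g ∈ a.coeff.support, AddMonoidAlgebra.single g (a.coeff g) := by
            conv_lhs => rw [← AddMonoidAlgebra.ofCoeff_coeff a, ← Finsupp.sum_single a.coeff]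
            rw [AddMonoidAlgebra.ofCoeff_finsuppSum]
            rfl
    _ = ∑ g ∈ (a.coeff.support.image Prod.fst) ×ˢ (Finset.univ : Finset (ZMod k)),
          AddMonoidAlgebra.single g (a.coeff g) :=
        Finset.sum_subset hsub (fun g _ hg => by
          rw [Finsupp.notMem_support_iff.1 hg]; simp)
    _ = _ := by rw [Finset.sum_product]

noncomputable def qq (a : AddMonoidAlgebra ℤ ((Fin r →₀ ℤ) × ZMod k)) (n : Fin r →₀ ℤ) : ℤ[X] :=
  ∑ j : ZMod k, Polynomial.C (a.coeff (n, j)) * X ^ (j.val)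

lemma phi_expand (a : AddMonoidAlgebra ℤ ((Fin r →₀ ℤ) × ZMod k)) :
    phi r k hk a = ∑ n ∈ a.coeff.support.image Prod.fst,
      cmap r k hk (Polynomial.aeval (zet k hk) (qq r k a n))
        * ((Additive.toMul (eAdd r k hk n) : (Ff r k hk)ˣ) : Ff r k hk) := by
  conv_lhs => rw [expand_sum r k a]
  rw [map_sum]
  refine Finset.sum_congr rfl fun n _ => ?_
  rw [map_sum]
  have hc : cmap r k hk (Polynomial.aeval (zet k hk) (qq r k a n))
      = ∑ j : ZMod k, ((a.coeff (n, j) : Ff r k hk)) * zF r k hk ^ (j.val) := by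
    rw [qq, map_sum, map_sum]
    refine Finset.sum_congr rfl fun j _ => ?_
    rw [map_mul, map_mul, Polynomial.aeval_C, map_pow, map_pow, Polynomial.aeval_X,
      eq_intCast, map_intCast]
    rfl
  rw [hc, Finset.sum_mul]
  refine Finset.sum_congr rfl fun j _ => ?_
  rw [phi_single]
  have h1 : ((Additive.toMul (eAdd r k hk n) : (Ff r k hk)ˣ) : Ff r k hk)
      = ((∏ i, XU r k hk i ^ (n i) : (Ff r k hk)ˣ) : Ff r k hk) := rfl
  rw [h1, Units.val_mul, Units.val_pow_eq_pow_val,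
    show ((zU r k hk : (Ff r k hk)ˣ) : Ff r k hk) = zF r k hk from rfl]
  ring

lemma ker_le (a : AddMonoidAlgebra ℤ ((Fin r →₀ ℤ) × ZMod k)) (ha : phi r k hk a = 0) :
    a ∈ Ideal.span {Polynomial.aeval (uu r k) (Polynomial.cyclotomic k ℤ)} := by
  classical
  have h0 : ∀ n ∈ a.coeff.support.image Prod.fst,
      Polynomial.aeval (zet k hk) (qq r k a n) = 0 :=
    indep r k hk _ _ (by rw [← phi_expand r k hk a]; exact ha)
  have hdvd : ∀ n ∈ a.coeff.support.image Prod.fst, Polynomial.cyclotomic k ℤ ∣ qq r k a n := by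
    intro n hn
    haveI := charZeroK k hk
    have haev : Polynomial.aeval (zet k hk) ((qq r k a n).map (Int.castRingHom ℚ)) = 0 := by
      rw [Polynomial.aeval_def, Polynomial.eval₂_map]
      have h2 : ((algebraMap ℚ (Kf k hk)).comp (Int.castRingHom ℚ)) = algebraMap ℤ (Kf k hk) :=
        Subsingleton.elim _ _
      rw [h2, ← Polynomial.aeval_def]
      exact h0 n hn
    have hd := minpoly.dvd ℚ (zet k hk) haev
    rw [← Polynomial.cyclotomic_eq_minpoly_rat (hzet k hk) hk,
      ← Polynomial.map_cyclotomic k (Int.castRingHom ℚ)] at hd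
    exact (Polynomial.map_dvd_map _ Int.cast_injective (Polynomial.cyclotomic.monic k ℤ)).1 hd
  have hslice : ∀ n : Fin r →₀ ℤ, AddMonoidAlgebra.single ((n, (0:ZMod k))) (1:ℤ)
      * Polynomial.aeval (uu r k) (qq r k a n)
      = ∑ j : ZMod k, AddMonoidAlgebra.single (n, j) (a.coeff (n, j)) := by
    intro n
    rw [qq, map_sum, Finset.mul_sum]
    refine Finset.sum_congr rfl fun j _ => ?_
    rw [map_mul, map_pow, Polynomial.aeval_X, Polynomial.aeval_C]
    have h1 : uu r k ^ (j.val) = AddMonoidAlgebra.single ((0 : Fin r →₀ ℤ), j) 1 := by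
      rw [uu, AddMonoidAlgebra.single_pow, one_pow]
      congr 1
      rw [Prod.smul_mk, smul_zero]
      congr 1
      rw [nsmul_eq_mul, mul_one, ZMod.natCast_val, ZMod.cast_id]
    have h2 : (algebraMap ℤ (AddMonoidAlgebra ℤ ((Fin r →₀ ℤ) × ZMod k))) (a.coeff (n,j))
        = AddMonoidAlgebra.single ((0:Fin r →₀ ℤ), (0:ZMod k)) (a.coeff (n,j)) := rfl
    rw [h1, h2, AddMonoidAlgebra.single_mul_single, AddMonoidAlgebra.single_mul_single]
    simp
  rw [expand_sum r k a]
  apply Ideal.sum_mem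
  intro n hn
  obtain ⟨h, hh⟩ := hdvd n hn
  rw [← hslice n]
  apply Ideal.mul_mem_left
  rw [hh, map_mul]
  exact Ideal.mul_mem_right _ _ (Ideal.subset_span (Set.mem_singleton _))

lemma phi_X (i : Fin r) :
    phi r k hk (AddMonoidAlgebra.single ((Finsupp.single i 1 : Fin r →₀ ℤ), (0 : ZMod k)) 1)
      = algebraMap (Pf r k hk) (Ff r k hk) (MvPolynomial.X i) := by
  rw [phi_single, ZMod.val_zero, pow_zero, mul_one, Int.cast_one, one_mul]
  have h1 : (∏ j, XU r k hk j ^ ((Finsupp.single i (1:ℤ)) j)) = XU r k hk i := by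
    rw [Finset.prod_eq_single i
      (fun b _ hb => by rw [Finsupp.single_apply, if_neg (Ne.symm hb), zpow_zero])
      (fun h => absurd (Finset.mem_univ i) h)]
    rw [Finsupp.single_eq_same, zpow_one]
  rw [h1]
  rfl
end CLA

/-- Let `R = ℤ[ℤ^r × ℤ/kℤ]` be the integral group algebra, `u ∈ R` the
canonical invertible element corresponding to `(0, 1̄)`, and
`p = (Φ_k(u))` the minimal prime ideal generated by the `k`-th cyclotomic
polynomial evaluated at `u`.  Then the localization `R_p` of `R` at the prime
ideal `p` is a field, isomorphic to the field of rational functions in `r`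
variables over the `k`-th cyclotomic field, i.e. to the fraction field of the
polynomial ring in `r` variables over `ℚ(ζ_k)`. -/
theorem localization_groupAlgebra_at_cyclotomic_prime_isom
    (r k : ℕ) (hk : 0 < k) :
    let R := AddMonoidAlgebra ℤ ((Fin r →₀ ℤ) × ZMod k)
    let u : R := AddMonoidAlgebra.single ((0 : Fin r →₀ ℤ), (1 : ZMod k)) (1 : ℤ)
    let p : Ideal R := Ideal.span {Polynomial.aeval u (Polynomial.cyclotomic k ℤ)}
    ∃ hp : p.IsPrime,
      letI := hp
      IsField (Localization.AtPrime p) ∧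
      Nonempty (Localization.AtPrime p ≃+*
        FractionRing (MvPolynomial (Fin r) (CyclotomicField (⟨k, hk⟩ : ℕ+) ℚ))) := by
  intro R u p
  haveI : NeZero k := ⟨hk.ne'⟩
  set φ : R →+* CLA.Ff r k hk := (CLA.phi r k hk).toRingHom with hφ
  have hker : RingHom.ker φ = p := by
    apply le_antisymm
    · intro a ha
      exact CLA.ker_le r k hk a (by rwa [RingHom.mem_ker] at ha)
    · rw [Ideal.span_le]
      intro x hx
      rw [Set.mem_singleton_iff] at hx
      subst hx
      show _ ∈ RingHom.ker φ
      rw [RingHom.mem_ker]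
      exact CLA.phi_cyc r k hk
  haveI hp : p.IsPrime := hker ▸ RingHom.ker_isPrime φ
  have hmem_iff : ∀ x : R, φ x = 0 ↔ x ∈ p := fun x => by rw [← hker, RingHom.mem_ker]
  have hunit : ∀ s : p.primeCompl, IsUnit (φ s) :=
    fun s => isUnit_iff_ne_zero.2 fun h0 => s.2 ((hmem_iff s).1 h0)
  set ψ : Localization.AtPrime p →+* CLA.Ff r k hk := IsLocalization.lift hunit with hψ
  have hinj : Function.Injective ψ := by
    rw [injective_iff_map_eq_zero]
    intro x hx
    obtain ⟨⟨b, s⟩, rfl⟩ := IsLocalization.mk'_surjective p.primeCompl x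
    have hb : φ b = 0 := by
      have h2 := (IsLocalization.lift_mk'_spec hunit b 0 s).1 hx
      rwa [mul_zero] at h2
    obtain ⟨c, hc⟩ := Ideal.mem_span_singleton'.1 ((hmem_iff b).1 hb)
    rw [IsLocalization.mk'_eq_zero_iff]
    refine ⟨⟨Polynomial.aeval u (CLA.gp k),
      fun hmem => CLA.phi_gp_ne r k hk ((hmem_iff _).2 hmem)⟩, ?_⟩
    show Polynomial.aeval u (CLA.gp k) * b = 0
    have h3 : Polynomial.aeval u (Polynomial.cyclotomic k ℤ) * Polynomial.aeval u (CLA.gp k) = 0 :=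
      CLA.cyc_mul_gp r k
    rw [← hc]
    linear_combination c * h3
  have hrange_phi : ∀ b : R, φ b ∈ ψ.range :=
    fun b => ⟨algebraMap R (Localization.AtPrime p) b, IsLocalization.lift_eq hunit b⟩
  let SF : Subfield (CLA.Ff r k hk) :=
    { ψ.range with
      inv_mem' := by
        intro x hx
        obtain ⟨y, rfl⟩ := RingHom.mem_range.1 hx
        obtain ⟨⟨b, s⟩, rfl⟩ := IsLocalization.mk'_surjective p.primeCompl y
        by_cases hb : φ b = 0
        · have h0 : ψ (IsLocalization.mk' _ b s) = 0 :=
            (IsLocalization.lift_mk'_spec hunit b 0 s).2 (by rw [hb, mul_zero])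
          rw [h0, inv_zero]
          exact RingHom.mem_range.2 ⟨0, map_zero ψ⟩
        · have hbp : b ∈ p.primeCompl := fun hmem => hb ((hmem_iff b).2 hmem)
          refine RingHom.mem_range.2 ⟨IsLocalization.mk' _ (s : R) ⟨b, hbp⟩, ?_⟩
          refine (inv_eq_of_mul_eq_one_right ?_).symm
          rw [← map_mul, IsLocalization.mk'_mul_mk'_eq_one ⟨b, hbp⟩ s, map_one] }
  have hCmem : ∀ aK : CLA.Kf k hk, CLA.cmap r k hk aK ∈ SF := by
    intro aK
    haveI : NeZero ((((⟨k, hk⟩ : ℕ+) : ℕ)) : ℚ) := ⟨by exact_mod_cast hk.ne'⟩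
    haveI := CLA.kCyc k hk
    have hadj := IsCyclotomicExtension.adjoin_roots
      (S := {((⟨k, hk⟩ : ℕ+) : ℕ)}) (A := ℚ) (B := CLA.Kf k hk) aK
    refine Algebra.adjoin_induction (p := fun x _ => CLA.cmap r k hk x ∈ SF)
      ?_ ?_ ?_ ?_ hadj
    · intro x hx
      obtain ⟨n, hn, -, hxn⟩ := hx
      rw [Set.mem_singleton_iff] at hn
      subst n
      obtain ⟨i, _, rfl⟩ := (CLA.hzet k hk).eq_pow_of_pow_eq_one hxn
      rw [map_pow, show CLA.cmap r k hk (CLA.zet k hk) = CLA.zF r k hk from rfl,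
        ← CLA.phi_u r k hk, ← map_pow]
      exact hrange_phi _
    · intro q
      rw [eq_ratCast (algebraMap ℚ (CLA.Kf k hk)) q, map_ratCast]
      exact SubfieldClass.ratCast_mem SF q
    · intro x y _ _ hx hy
      rw [map_add]
      exact add_mem hx hy
    · intro x y _ _ hx hy
      rw [map_mul]
      exact mul_mem hx hy
  have hXmem : ∀ q : CLA.Pf r k hk,
      algebraMap (CLA.Pf r k hk) (CLA.Ff r k hk) q ∈ SF := by
    intro q
    induction q using MvPolynomial.induction_on with
    | C aK => exact hCmem aK
    | add p1 p2 h1 h2 =>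
      rw [map_add]
      exact add_mem h1 h2
    | mul_X p1 i h1 =>
      rw [map_mul]
      refine mul_mem h1 ?_
      rw [← CLA.phi_X r k hk i]
      exact hrange_phi _
  have hsurj : Function.Surjective ψ := by
    intro x
    obtain ⟨qa, qb, hqb, hx⟩ := IsFractionRing.div_surjective (A := CLA.Pf r k hk) x
    have hmem : x ∈ SF := by
      rw [← hx]
      exact div_mem (hXmem qa) (hXmem qb)
    exact RingHom.mem_range.1 hmem
  have e : Localization.AtPrime p ≃+*
      FractionRing (MvPolynomial (Fin r) (CyclotomicField (⟨k, hk⟩ : ℕ+) ℚ)) :=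
    RingEquiv.ofBijective ψ ⟨hinj, hsurj⟩
  exact ⟨hp, MulEquiv.isField (Field.toIsField _) e.toMulEquiv, ⟨e⟩⟩
end

section
/- Additivity of the trace over direct sums: let C be a preadditive symmetric monoidal category with binary biproducts in which the tensor product is additive in each variable. Let A and B be objects equipped with duality data, let f : A → A and g : B → B be endomorphisms, and suppose the biproduct A ⊕ B is equipped with some duality data. Then the trace of the endomorphism f ⊕ g : A ⊕ B → A ⊕ B equals tr(f) + tr(g) as endomorphisms of the tensor unit 𝟙. -/
open CategoryTheory MonoidalCategory CategoryTheory.Limits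

/-- The trace (Lefschetz index) of an endomorphism `f : A ⟶ A` in a symmetric
monoidal category, computed from the duality data `p` (an exact pairing of `A`
with a chosen dual `A'`): the composite `ε ∘ (id_{A'} ⊗ f) ∘ β_{A,A'} ∘ η`. -/
noncomputable def traceWith {C : Type*} [Category C] [MonoidalCategory C]
    [SymmetricCategory C] (A A' : C) (p : ExactPairing A A') (f : A ⟶ A) :
    𝟙_ C ⟶ 𝟙_ C :=
  letI := p
  ExactPairing.coevaluation A A' ≫ (β_ A A').hom ≫ (A' ◁ f) ≫
    ExactPairing.evaluation A A'

/-- The trace is additive in its argument. -/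
theorem traceWith_add {C : Type*} [Category C] [MonoidalCategory C]
    [SymmetricCategory C] [Preadditive C] [MonoidalPreadditive C]
    (A A' : C) (p : ExactPairing A A') (f g : A ⟶ A) :
    traceWith A A' p (f + g) = traceWith A A' p f + traceWith A A' p g := by
  simp [traceWith]

/-- Cyclicity of the trace: `tr (u ≫ v) = tr (v ≫ u)`, for any choices of
duality data on the two objects. -/
theorem traceWith_comp_comm {C : Type*} [Category C] [MonoidalCategory C]
    [SymmetricCategory C] (X X' Z Z' : C) (pX : ExactPairing X X')
    (pZ : ExactPairing Z Z') (u : X ⟶ Z) (v : Z ⟶ X) :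
    traceWith X X' pX (u ≫ v) = traceWith Z Z' pZ (v ≫ u) := by
  letI := pX
  letI := pZ
  obtain ⟨m, hm1, hm2⟩ : ∃ m : X' ⟶ Z',
      (m ▷ Z ≫ ε_ Z Z' = X' ◁ v ≫ ε_ X X') ∧
        (η_ X X' ≫ X ◁ m = η_ Z Z' ≫ v ▷ Z') := by
    letI : HasRightDual X := ⟨X'⟩
    letI : HasRightDual Z := ⟨Z'⟩
    exact ⟨vᘁ, rightAdjointMate_comp_evaluation v,
      coevaluation_comp_rightAdjointMate v⟩
  dsimp [traceWith]
  calc η_ X X' ≫ (β_ X X').hom ≫ X' ◁ (u ≫ v) ≫ ε_ X X'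
      = η_ X X' ≫ (β_ X X').hom ≫ X' ◁ u ≫ (m ▷ Z ≫ ε_ Z Z') := by
        rw [MonoidalCategory.whiskerLeft_comp, hm1]
        simp only [Category.assoc]
    _ = η_ X X' ≫ (u ▷ X' ≫ (β_ Z X').hom) ≫ m ▷ Z ≫ ε_ Z Z' := by
        rw [BraidedCategory.braiding_naturality_left]
        simp only [Category.assoc]
    _ = η_ X X' ≫ u ▷ X' ≫ (Z ◁ m ≫ (β_ Z Z').hom) ≫ ε_ Z Z' := by
        rw [BraidedCategory.braiding_naturality_right]
        simp only [Category.assoc]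
    _ = (η_ X X' ≫ X ◁ m) ≫ u ▷ Z' ≫ (β_ Z Z').hom ≫ ε_ Z Z' := by
        simp only [Category.assoc]
        rw [← whisker_exchange_assoc]
    _ = η_ Z Z' ≫ v ▷ Z' ≫ u ▷ Z' ≫ (β_ Z Z').hom ≫ ε_ Z Z' := by
        rw [hm2]
        simp only [Category.assoc]
    _ = η_ Z Z' ≫ (β_ Z Z').hom ≫ Z' ◁ (v ≫ u) ≫ ε_ Z Z' := by
        simp only [MonoidalCategory.whiskerLeft_comp, Category.assoc,
          BraidedCategory.braiding_naturality_left_assoc]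

/-- Additivity of the trace over direct sums: in a preadditive symmetric
monoidal category with binary biproducts in which the tensor product is
additive in each variable, if `A` and `B` are equipped with duality data, and
the biproduct `A ⊞ B` is equipped with some duality data, then the trace of
`f ⊕ g : A ⊞ B ⟶ A ⊞ B` equals `tr f + tr g` as endomorphisms of the tensor
unit. -/
theorem traceWith_biprod_map_add
    {C : Type*} [Category C] [MonoidalCategory C] [SymmetricCategory C]
    [Preadditive C] [MonoidalPreadditive C] [HasBinaryBiproducts C]
    (A A' B B' S : C) (pA : ExactPairing A A') (pB : ExactPairing B B')
    (pS : ExactPairing (A ⊞ B) S) (f : A ⟶ A) (g : B ⟶ B) :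
    traceWith (A ⊞ B) S pS (biprod.map f g) =
      traceWith A A' pA f + traceWith B B' pB g := by
  have hmap : biprod.map f g =
      biprod.fst ≫ (f ≫ biprod.inl) + biprod.snd ≫ (g ≫ biprod.inr) := by
    apply biprod.hom_ext <;> simp
  rw [hmap, traceWith_add,
    traceWith_comp_comm (A ⊞ B) S A A' pS pA biprod.fst (f ≫ biprod.inl),
    traceWith_comp_comm (A ⊞ B) S B B' pS pB biprod.snd (g ≫ biprod.inr)]
  simp
end
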